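/- Let (X,d) be a compact metric space and f : X → X a homeomorphism. Suppose there is η > 0 such that for all n ≥ 1, any two points lying on distinct periodic orbits of period dividing n are (η,n)-separated, and suppose the specification-based counting bound holds: for every ε < η and all n, s(ε,n,f) ≤ card(Fix(f^{n+N(ε)})) for some N(ε) ∈ ℕ. Then h_top(f) = limsup_{n→∞} (1/n) log card(Fix(f^n)). -/

import Mathlib

open Filter Topology MeasureTheory

/-- `E` is an `(ε,n)`-separated set for `f`. -/
def IsSeparated {X : Type*} [MetricSpace X] (f : X → X) (ε : ℝ) (n : ℕ) (E : Set X) : Prop :=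
  ∀ x ∈ E, ∀ y ∈ E, x ≠ y → ∃ k < n, ε < dist (f^[k] x) (f^[k] y)

/-- Maximal cardinality of an `(ε,n)`-separated set. -/
noncomputable def sepCount {X : Type*} [MetricSpace X] (f : X → X) (ε : ℝ) (n : ℕ) : ℕ :=
  sSup {m : ℕ | ∃ E : Finset X, IsSeparated f ε n ↑E ∧ E.card = m}

/-- Exponential growth rate of `(ε,n)`-separated sets. -/
noncomputable def entSep {X : Type*} [MetricSpace X] (f : X → X) (ε : ℝ) : ℝ :=
  Filter.limsup (fun n : ℕ => Real.log (sepCount f ε n) / n) Filter.atTop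

/-- Topological entropy via separated sets: the limit as `ε → 0` (equivalently, the
supremum over `ε > 0`, by monotonicity) of the growth rate of `(ε,n)`-separated sets. -/
noncomputable def topEnt {X : Type*} [MetricSpace X] (f : X → X) : ℝ :=
  ⨆ ε : {e : ℝ // 0 < e}, entSep f ε.1

/-- Growth rate of periodic points: `limsup (1/n) log card Fix(fⁿ)`. -/
noncomputable def perGrowth {X : Type*} [MetricSpace X] (f : X → X) : ℝ :=
  Filter.limsup (fun n : ℕ => Real.log (({x : X | f^[n] x = x}).ncard) / n) Filter.atTop

set_option linter.unusedSectionVars false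

section aux
variable {X : Type*} [MetricSpace X] [CompactSpace X] (f : X → X)

lemma log_nat_nonneg (k : ℕ) : 0 ≤ Real.log k := by
  rcases Nat.eq_zero_or_pos k with h | h
  · simp [h]
  · exact Real.log_nonneg (by exact_mod_cast h)

lemma sep_bound {ε : ℝ} (hε : 0 < ε) :
    ∃ m : ℕ, 1 ≤ m ∧ ∀ (n : ℕ) (E : Finset X), IsSeparated f ε n ↑E → E.card ≤ m ^ n := by
  classical
  obtain ⟨t, htfin, htcov⟩ :=
    (Metric.totallyBounded_iff.1 (isCompact_univ (X := X)).totallyBounded) (ε/2) (by linarith)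
  set T := htfin.toFinset with hT
  have hcov : ∀ z : X, ∃ c ∈ T, dist z c < ε/2 := by
    intro z
    have := htcov (Set.mem_univ z)
    simp only [Set.mem_iUnion, Metric.mem_ball] at this
    obtain ⟨c, hc, hd⟩ := this
    exact ⟨c, htfin.mem_toFinset.2 hc, hd⟩
  refine ⟨T.card + 1, Nat.le_add_left _ _, ?_⟩
  intro n E hE
  have hcard : E.card ≤ T.card ^ n := by
    set g : X → {c // c ∈ T} := fun z => ⟨(hcov z).choose, (hcov z).choose_spec.1⟩ with hg
    have hgd : ∀ z : X, dist z (g z).1 < ε/2 := fun z => (hcov z).choose_spec.2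
    have hinj := Finset.card_le_card_of_injOn (s := E) (t := (Finset.univ : Finset (Fin n → {c // c ∈ T})))
      (fun x (k : Fin n) => g (f^[(k : ℕ)] x)) (fun a _ => Finset.mem_univ _) ?_
    · calc E.card ≤ (Finset.univ : Finset (Fin n → {c // c ∈ T})).card := hinj
        _ = T.card ^ n := by
          simp [Finset.card_univ, Fintype.card_fun]
    · intro x hx y hy hxy
      by_contra hne
      obtain ⟨k, hk, hd⟩ := hE x hx y hy hne
      have h1 : g (f^[k] x) = g (f^[k] y) := by
        have := congrFun hxy (⟨k, hk⟩ : Fin n)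
        simpa using this
      have hlt : dist (f^[k] x) (f^[k] y) < ε := by
        calc dist (f^[k] x) (f^[k] y)
            ≤ dist (f^[k] x) (g (f^[k] x)).1 + dist (f^[k] y) (g (f^[k] y)).1 := by
              rw [h1]; exact dist_triangle_right _ _ _
          _ < ε/2 + ε/2 := add_lt_add (hgd _) (hgd _)
          _ = ε := by ring
      linarith
  calc E.card ≤ T.card ^ n := hcard
    _ ≤ (T.card + 1) ^ n := Nat.pow_le_pow_left (Nat.le_succ _) n

lemma sepSet_nonempty (ε : ℝ) (n : ℕ) :
    (0 : ℕ) ∈ {m : ℕ | ∃ E : Finset X, IsSeparated f ε n ↑E ∧ E.card = m} := by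
  refine ⟨∅, ?_, Finset.card_empty⟩
  intro x hx
  simp at hx

lemma sepSet_bdd {ε : ℝ} (hε : 0 < ε) (n : ℕ) :
    BddAbove {m : ℕ | ∃ E : Finset X, IsSeparated f ε n ↑E ∧ E.card = m} := by
  obtain ⟨m, _, hb⟩ := sep_bound f hε
  exact ⟨m ^ n, fun k ⟨E, hE, hc⟩ => hc ▸ hb n E hE⟩

lemma card_le_sepCount {ε : ℝ} (hε : 0 < ε) (n : ℕ) (E : Finset X)
    (hE : IsSeparated f ε n ↑E) : E.card ≤ sepCount f ε n :=
  le_csSup (sepSet_bdd f hε n) ⟨E, hE, rfl⟩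

lemma sepCount_exists {ε : ℝ} (hε : 0 < ε) (n : ℕ) :
    ∃ E : Finset X, IsSeparated f ε n ↑E ∧ E.card = sepCount f ε n :=
  Nat.sSup_mem ⟨0, sepSet_nonempty f ε n⟩ (sepSet_bdd f hε n)

lemma sepCount_le_pow {ε : ℝ} (hε : 0 < ε) :
    ∃ m : ℕ, 1 ≤ m ∧ ∀ n, sepCount f ε n ≤ m ^ n := by
  obtain ⟨m, hm, hb⟩ := sep_bound f hε
  exact ⟨m, hm, fun n => csSup_le ⟨0, sepSet_nonempty f ε n⟩
    (fun k ⟨E, hE, hc⟩ => hc ▸ hb n E hE)⟩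

lemma sepCount_anti {ε ε' : ℝ} (hε' : 0 < ε') (h : ε' ≤ ε) (n : ℕ) :
    sepCount f ε n ≤ sepCount f ε' n := by
  rcases le_or_gt ε 0 with hε | hε
  · -- ε ≤ 0 contradiction with 0 < ε' ≤ ε
    exact absurd (lt_of_lt_of_le hε' h) (not_lt.2 hε)
  obtain ⟨E, hE, hc⟩ := sepCount_exists f hε n
  rw [← hc]
  refine card_le_sepCount f hε' n E ?_
  intro x hx y hy hxy
  obtain ⟨k, hk, hd⟩ := hE x hx y hy hxy
  exact ⟨k, hk, lt_of_le_of_lt h hd⟩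

lemma one_le_sepCount [Nonempty X] {ε : ℝ} (hε : 0 < ε) (n : ℕ) :
    1 ≤ sepCount f ε n := by
  obtain ⟨x⟩ := ‹Nonempty X›
  have := card_le_sepCount f hε n {x} ?_
  · simpa using this
  · intro a ha b hb hab
    simp only [Finset.coe_singleton, Set.mem_singleton_iff] at ha hb
    exact absurd (ha.trans hb.symm) hab

end aux

lemma fix_card_le {X : Type*} [MetricSpace X] {f : X → X} {η : ℝ} {n : ℕ} (hn : 1 ≤ n)
    (hfin : ({x : X | f^[n] x = x}).Finite)
    (hsepn : ∀ x y : X, f^[n] x = x → f^[n] y = y →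
      (∀ k : ℕ, f^[k] x ≠ y) → ∃ k < n, η < dist (f^[k] x) (f^[k] y)) :
    ∃ E : Finset X, IsSeparated f η n ↑E ∧ ({x : X | f^[n] x = x}).ncard ≤ n * E.card := by
  classical
  set S := hfin.toFinset with hS
  have hmemS : ∀ x, x ∈ S ↔ f^[n] x = x := fun x => hfin.mem_toFinset
  have hiter : ∀ x ∈ S, ∀ a : ℕ, f^[a] x = f^[a % n] x := by
    intro x hx a
    conv_lhs => rw [← Nat.mod_add_div a n]
    rw [Function.iterate_add_apply]
    congr 1
    rw [Function.iterate_mul]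
    exact Function.iterate_fixed ((hmemS x).1 hx) _
  set orb : X → Finset X := fun x => (Finset.range n).image (fun k => f^[k] x) with horb
  have horb_card : ∀ x, (orb x).card ≤ n :=
    fun x => le_trans Finset.card_image_le (by simp)
  have hmem_orb : ∀ x ∈ S, ∀ k, f^[k] x ∈ orb x := by
    intro x hx k
    rw [hiter x hx k]
    exact Finset.mem_image.2 ⟨k % n, Finset.mem_range.2 (Nat.mod_lt _ hn), rfl⟩
  have hself : ∀ x ∈ S, x ∈ orb x := by
    intro x hx
    have := hmem_orb x hx 0
    simpa using this
  have horb_eq : ∀ x ∈ S, ∀ k, orb (f^[k] x) = orb x := by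
    intro x hx k
    apply Finset.Subset.antisymm
    · intro z hz
      obtain ⟨j, hj, rfl⟩ := Finset.mem_image.1 hz
      rw [← Function.iterate_add_apply]
      exact hmem_orb x hx (j + k)
    · intro z hz
      obtain ⟨i, hi, rfl⟩ := Finset.mem_image.1 hz
      have hin := Finset.mem_range.1 hi
      refine Finset.mem_image.2 ⟨(i + (n - k % n)) % n, Finset.mem_range.2 (Nat.mod_lt _ hn), ?_⟩
      rw [← Function.iterate_add_apply, hiter x hx ((i + (n - k % n)) % n + k)]
      congr 1
      rw [Nat.mod_add_mod]
      obtain ⟨t, ht⟩ : ∃ t, t = n * (k / n) := ⟨_, rfl⟩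
      have h1 : k % n < n := Nat.mod_lt _ hn
      have h2 : k % n + t = k := by rw [ht]; exact Nat.mod_add_div k n
      have h3 : i + (n - k % n) + k = i + n * (1 + k / n) := by
        have h4 : i + (n - k % n) + k = i + (n + t) := by omega
        rw [h4, ht]; ring
      rw [h3, Nat.add_mul_mod_self_left, Nat.mod_eq_of_lt hin]
  set T := S.image orb with hT
  have hrep : ∀ O ∈ T, ∃ x, x ∈ S ∧ orb x = O := by
    intro O hO
    obtain ⟨x, hx, hxO⟩ := Finset.mem_image.1 hO
    exact ⟨x, hx, hxO⟩
  choose rep hrepS hrepO using hrep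
  set E := T.attach.image (fun O => rep O.1 O.2) with hE
  have hET : E.card = T.card := by
    rw [hE, ← Finset.card_attach (s := T)]
    apply Finset.card_image_of_injOn
    intro O1 _ O2 _ heq
    have heq' : rep O1.1 O1.2 = rep O2.1 O2.2 := heq
    exact Subtype.ext (by rw [← hrepO O1.1 O1.2, ← hrepO O2.1 O2.2, heq'])
  have hsepE : IsSeparated f η n ↑E := by
    intro x hx y hy hxy
    simp only [hE, Finset.coe_image, Set.mem_image, Finset.mem_coe, Finset.mem_attach] at hx hy
    obtain ⟨O1, -, rfl⟩ := hx
    obtain ⟨O2, -, rfl⟩ := hy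
    have hxS := hrepS O1.1 O1.2
    have hyS := hrepS O2.1 O2.2
    refine hsepn _ _ ((hmemS _).1 hxS) ((hmemS _).1 hyS) ?_
    intro k hk
    have hOeq : O1 = O2 := by
      refine Subtype.ext ?_
      rw [← hrepO O1.1 O1.2, ← hrepO O2.1 O2.2, ← hk, horb_eq _ hxS k]
    exact hxy (by rw [hOeq])
  refine ⟨E, hsepE, ?_⟩
  have hScard : S.card ≤ T.card * n := by
    have hsub : S ⊆ T.biUnion (fun O => O) := by
      intro x hx
      exact Finset.mem_biUnion.2 ⟨orb x, Finset.mem_image_of_mem orb hx, hself x hx⟩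
    calc S.card ≤ (T.biUnion (fun O => O)).card := Finset.card_le_card hsub
      _ ≤ ∑ O ∈ T, O.card := Finset.card_biUnion_le
      _ ≤ ∑ _O ∈ T, n := Finset.sum_le_sum (fun O hO => by
          obtain ⟨x, _, rfl⟩ := Finset.mem_image.1 hO
          exact horb_card x)
      _ = T.card * n := by rw [Finset.sum_const, smul_eq_mul]
  rw [Set.ncard_eq_toFinset_card _ hfin]
  calc hfin.toFinset.card = S.card := by rw [hS]
    _ ≤ T.card * n := hScard
    _ = n * E.card := by rw [hET, Nat.mul_comm]


/-- Uniform separation of distinct periodic orbits together with the specification-based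
counting bound gives `h_top(f) = p(f)`. -/
theorem stmt16 {X : Type*} [MetricSpace X] [CompactSpace X] (f : X ≃ₜ X)
    (hfin : ∀ n : ℕ, 1 ≤ n → ({x : X | (⇑f)^[n] x = x}).Finite)
    (η : ℝ) (hη : 0 < η)
    (hsep : ∀ n : ℕ, 1 ≤ n → ∀ x y : X, (⇑f)^[n] x = x → (⇑f)^[n] y = y →
      (∀ k : ℕ, (⇑f)^[k] x ≠ y) → ∃ k < n, η < dist ((⇑f)^[k] x) ((⇑f)^[k] y))
    (N : ℝ → ℕ)
    (hcount : ∀ ε : ℝ, 0 < ε → ε < η → ∀ n : ℕ,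
      sepCount ⇑f ε n ≤ ({x : X | (⇑f)^[n + N ε] x = x}).ncard) :
    topEnt ⇑f = perGrowth ⇑f := by
  classical
  rcases isEmpty_or_nonempty X with hX | hX
  · -- empty space: everything vanishes
    haveI : Nonempty {e : ℝ // 0 < e} := ⟨⟨1, one_pos⟩⟩
    have hsc : ∀ (ε : ℝ) (n : ℕ), sepCount (⇑f) ε n = 0 := by
      intro ε n
      have hset : {m : ℕ | ∃ E : Finset X, IsSeparated (⇑f) ε n ↑E ∧ E.card = m} = {0} := by
        ext m
        constructor
        · rintro ⟨E, -, rfl⟩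
          simp [Finset.eq_empty_of_isEmpty E]
        · rintro rfl
          exact sepSet_nonempty (⇑f) ε n
      rw [sepCount, hset, csSup_singleton]
    have hent : ∀ ε : ℝ, entSep (⇑f) ε = 0 := by
      intro ε
      have hfun : (fun n : ℕ => Real.log (sepCount (⇑f) ε n) / n) = fun _ => (0:ℝ) := by
        funext n; simp [hsc]
      unfold entSep
      rw [hfun, limsup_const]
    have htop : topEnt (⇑f) = 0 := by
      unfold topEnt
      simp only [hent]
      exact ciSup_const
    have hper : perGrowth (⇑f) = 0 := by
      unfold perGrowth
      have hemp : ∀ n : ℕ, ({x : X | (⇑f)^[n] x = x} : Set X) = ∅ :=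
        fun n => Set.eq_empty_of_isEmpty _
      simp only [hemp, Set.ncard_empty, Nat.cast_zero, Real.log_zero, zero_div]
      exact limsup_const 0
    rw [htop, hper]
  haveI := hX
  haveI : Nonempty {e : ℝ // 0 < e} := ⟨⟨η, hη⟩⟩
  set F := ⇑f with hF
  set a : ℕ → ℕ := fun n => ({x : X | F^[n] x = x}).ncard with ha
  set b : ℕ → ℝ := fun n => Real.log (a n) / n with hb
  have hbnn : ∀ n, 0 ≤ b n := fun n => div_nonneg (log_nat_nonneg _) (Nat.cast_nonneg n)
  have hunn : ∀ (ε : ℝ) (n : ℕ), 0 ≤ Real.log (sepCount F ε n) / n :=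
    fun ε n => div_nonneg (log_nat_nonneg _) (Nat.cast_nonneg n)
  -- uniform bound on the separated growth sequence
  have huB : ∀ ε : ℝ, 0 < ε → ∃ C : ℝ, 0 ≤ C ∧ ∀ n, Real.log (sepCount F ε n) / n ≤ C := by
    intro ε hε
    obtain ⟨m, hm1, hmB⟩ := sepCount_le_pow F hε
    refine ⟨Real.log m, log_nat_nonneg m, ?_⟩
    intro n
    rcases Nat.eq_zero_or_pos n with rfl | hn
    · simp only [Nat.cast_zero, div_zero]
      exact log_nat_nonneg m
    · have hsp : (1:ℝ) ≤ (sepCount F ε n : ℝ) := by exact_mod_cast one_le_sepCount F hε n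
      have h1 : Real.log (sepCount F ε n) ≤ (n : ℝ) * Real.log m := by
        calc Real.log (sepCount F ε n) ≤ Real.log ((m : ℝ) ^ n) := by
              apply Real.log_le_log (by linarith)
              exact_mod_cast hmB n
          _ = (n : ℝ) * Real.log m := Real.log_pow m n
      have hnp : (0:ℝ) < n := by exact_mod_cast hn
      rw [div_le_iff₀ hnp]
      linarith
  -- orbit counting: periodic points dominated by separated sets at scale η
  have horbit : ∀ n : ℕ, 1 ≤ n → (a n : ℝ) ≤ (n : ℝ) * (sepCount F η n : ℝ) := by
    intro n hn
    obtain ⟨E, hE, hcard⟩ :=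
      fix_card_le hn (hfin n hn) (fun x y hx hy hne => hsep n hn x y hx hy hne)
    have h2 : E.card ≤ sepCount F η n := card_le_sepCount F hη n E hE
    have h3 : a n ≤ n * sepCount F η n := le_trans hcard (Nat.mul_le_mul_left n h2)
    exact_mod_cast h3
  obtain ⟨Cη, hCη0, hCηB⟩ := huB η hη
  have hbB : ∀ n, b n ≤ 1 + Cη := by
    intro n
    rcases Nat.eq_zero_or_pos n with rfl | hn
    · simp only [hb, Nat.cast_zero, div_zero]
      linarith
    · have hnp : (0:ℝ) < n := by exact_mod_cast hn
      rcases Nat.eq_zero_or_pos (a n) with h0 | h1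
      · simp only [hb, h0, Nat.cast_zero, Real.log_zero, zero_div]
        linarith
      · have hsp : (1:ℝ) ≤ (sepCount F η n : ℝ) := by exact_mod_cast one_le_sepCount F hη n
        have hl1 : Real.log (a n) ≤ Real.log ((n:ℝ) * (sepCount F η n)) :=
          Real.log_le_log (by exact_mod_cast h1) (horbit n hn)
        have hl2 : Real.log ((n:ℝ) * (sepCount F η n))
            = Real.log n + Real.log (sepCount F η n) :=
          Real.log_mul (ne_of_gt hnp) (by linarith)
        have hl3 : Real.log n ≤ (n:ℝ) :=
          le_trans (Real.log_le_sub_one_of_pos hnp) (by linarith)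
        have hl4 : Real.log (sepCount F η n) ≤ (n:ℝ) * Cη := by
          have := hCηB n
          rw [div_le_iff₀ hnp] at this
          linarith
        simp only [hb]
        rw [div_le_iff₀ hnp]
        nlinarith
  have hperB : IsBoundedUnder (· ≤ ·) atTop b := isBoundedUnder_of ⟨1 + Cη, hbB⟩
  have hperCo : IsCoboundedUnder (· ≤ ·) atTop b :=
    (isBoundedUnder_of (r := (· ≥ ·)) ⟨0, hbnn⟩).isCoboundedUnder_le
  have hper0 : (0:ℝ) ≤ limsup b atTop :=
    le_limsup_of_frequently_le (Frequently.of_forall hbnn) hperB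
  have hpg : perGrowth F = limsup b atTop := rfl
  -- upper bound: entSep at small scales is at most the periodic growth rate
  have hub : ∀ ε : ℝ, 0 < ε → ε < η → entSep F ε ≤ limsup b atTop := by
    intro ε hε hεη
    apply le_of_forall_gt_imp_ge_of_dense
    intro c hc
    set c' := (limsup b atTop + c)/2 with hc'
    have hc'1 : limsup b atTop < c' := by rw [hc']; linarith
    have hc'2 : c' < c := by rw [hc']; linarith
    have hc'0 : (0:ℝ) ≤ c' := le_trans hper0 hc'1.le
    have hev : ∀ᶠ n in atTop, b n < c' := eventually_lt_of_limsup_lt hc'1 hperB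
    obtain ⟨M, hM⟩ := eventually_atTop.1 hev
    have hev3 : ∀ᶠ n : ℕ in atTop, c' * (N ε) / n ≤ c - c' := by
      have ht := tendsto_const_div_atTop_nhds_zero_nat (c' * (N ε))
      exact ht.eventually (eventually_le_nhds (by linarith))
    have hgoal : Filter.limsup (fun n : ℕ => Real.log (sepCount F ε n) / n) Filter.atTop ≤ c := by
      apply limsup_le_of_le
        ((isBoundedUnder_of (r := (· ≥ ·)) ⟨0, fun n => hunn ε n⟩).isCoboundedUnder_le)
      filter_upwards [eventually_ge_atTop (max M 1), hev3] with n hn hsmall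
      have hn1 : 1 ≤ n := le_trans (le_max_right _ _) hn
      have hnM : M ≤ n := le_trans (le_max_left _ _) hn
      have hnp : (0:ℝ) < n := by exact_mod_cast hn1
      have hkp : (0:ℝ) < ((n + N ε : ℕ) : ℝ) := by
        have : 0 < n + N ε := lt_of_lt_of_le hn1 (Nat.le_add_right n _)
        exact_mod_cast this
      have h2 : b (n + N ε) < c' := hM _ (le_trans hnM (Nat.le_add_right _ _))
      simp only [hb] at h2
      rw [div_lt_iff₀ hkp] at h2
      have h4 : Real.log (sepCount F ε n) ≤ Real.log (a (n + N ε)) := by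
        have hsp : (1:ℝ) ≤ (sepCount F ε n : ℝ) := by exact_mod_cast one_le_sepCount F hε n
        apply Real.log_le_log (by linarith)
        exact_mod_cast hcount ε hε hεη n
      calc Real.log (sepCount F ε n) / n ≤ (c' * ((n + N ε : ℕ):ℝ)) / n :=
            div_le_div_of_nonneg_right (le_of_lt (lt_of_le_of_lt h4 h2)) hnp.le
        _ = c' + c' * (N ε) / n := by
            push_cast
            field_simp
        _ ≤ c' + (c - c') := by linarith
        _ = c := by ring
    exact hgoal
  -- monotonicity of entSep in ε
  have hanti : ∀ ε ε' : ℝ, 0 < ε' → ε' ≤ ε → entSep F ε ≤ entSep F ε' := by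
    intro ε ε' hε' h
    have hε : 0 < ε := lt_of_lt_of_le hε' h
    obtain ⟨C, hC0, hCB⟩ := huB ε' hε'
    unfold entSep
    apply limsup_le_limsup
    · apply Eventually.of_forall
      intro n
      apply div_le_div_of_nonneg_right _ (Nat.cast_nonneg n)
      have hsp : (1:ℝ) ≤ (sepCount F ε n : ℝ) := by exact_mod_cast one_le_sepCount F hε n
      apply Real.log_le_log (by linarith)
      exact_mod_cast sepCount_anti F hε' h n
    · exact (isBoundedUnder_of (r := (· ≥ ·)) ⟨0, fun n => hunn ε n⟩).isCoboundedUnder_le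
    · exact isBoundedUnder_of ⟨C, hCB⟩
  have hkey : ∀ ε : ℝ, 0 < ε → entSep F ε ≤ limsup b atTop := by
    intro ε hε
    have hm1 : 0 < min ε (η/2) := lt_min hε (by linarith)
    have hm2 : min ε (η/2) < η := lt_of_le_of_lt (min_le_right _ _) (by linarith)
    calc entSep F ε ≤ entSep F (min ε (η/2)) := hanti _ _ hm1 (min_le_left _ _)
      _ ≤ limsup b atTop := hub _ hm1 hm2
  have hbddR : BddAbove (Set.range fun ε : {e : ℝ // 0 < e} => entSep F ε.1) := by
    refine ⟨limsup b atTop, ?_⟩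
    rintro x ⟨⟨ε, hε⟩, rfl⟩
    exact hkey ε hε
  have hle : topEnt F ≤ limsup b atTop := by
    unfold topEnt
    apply ciSup_le
    rintro ⟨ε, hε⟩
    exact hkey ε hε
  -- lower bound: periodic growth is at most entSep at scale η
  have h1 : limsup b atTop ≤ entSep F η := by
    have hent0 : (0:ℝ) ≤ entSep F η := by
      unfold entSep
      exact le_limsup_of_frequently_le (Frequently.of_forall (hunn η))
        (isBoundedUnder_of ⟨Cη, hCηB⟩)
    apply le_of_forall_gt_imp_ge_of_dense
    intro c hc
    set c' := (entSep F η + c)/2 with hc'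
    have hc'1 : entSep F η < c' := by rw [hc']; linarith
    have hc'2 : c' < c := by rw [hc']; linarith
    have hc'0 : (0:ℝ) ≤ c' := le_trans hent0 hc'1.le
    have hev : ∀ᶠ n : ℕ in atTop, Real.log (sepCount F η n) / (n:ℝ) < c' :=
      eventually_lt_of_limsup_lt hc'1 (isBoundedUnder_of ⟨Cη, hCηB⟩)
    have hlogn : ∀ᶠ n : ℕ in atTop, Real.log n / (n:ℝ) ≤ c - c' := by
      have ht : Tendsto (fun n : ℕ => Real.log n / (n:ℝ)) atTop (nhds 0) :=
        (Real.isLittleO_log_id_atTop.tendsto_div_nhds_zero).comp tendsto_natCast_atTop_atTop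
      exact ht.eventually (eventually_le_nhds (by linarith))
    apply limsup_le_of_le hperCo
    filter_upwards [hev, hlogn, eventually_ge_atTop 1] with n hs hl hn1
    have hnp : (0:ℝ) < n := by exact_mod_cast hn1
    rcases Nat.eq_zero_or_pos (a n) with h0 | ha1
    · simp only [hb, h0, Nat.cast_zero, Real.log_zero, zero_div]
      linarith
    · have hsp : (1:ℝ) ≤ (sepCount F η n : ℝ) := by exact_mod_cast one_le_sepCount F hη n
      have hl1 : Real.log (a n) ≤ Real.log ((n:ℝ) * (sepCount F η n)) :=
        Real.log_le_log (by exact_mod_cast ha1) (horbit n hn1)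
      have hl2 : Real.log ((n:ℝ) * (sepCount F η n))
          = Real.log n + Real.log (sepCount F η n) :=
        Real.log_mul (ne_of_gt hnp) (by linarith)
      have hmain : b n ≤ Real.log n / n + Real.log (sepCount F η n) / n := by
        simp only [hb]
        calc Real.log (a n) / n ≤ (Real.log n + Real.log (sepCount F η n)) / n :=
              div_le_div_of_nonneg_right (hl2 ▸ hl1) hnp.le
          _ = _ := add_div _ _ _
      calc b n ≤ Real.log n / n + Real.log (sepCount F η n) / n := hmain
        _ ≤ (c - c') + c' := add_le_add hl hs.le
        _ = c := by ring
  have hge : limsup b atTop ≤ topEnt F := le_trans h1 (le_ciSup hbddR ⟨η, hη⟩)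
  rw [hpg]
  exact le_antisymm hle hge
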